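/- There exists A₀ > 0, depending only on N, m, p and σ, such that for every A ≥ A₀ and every T > 0 the following holds with a := (m A^{m−1}/(β(m−1)))^{1/2}: for every t ∈ [0,T) and every x ∈ ℝᴺ with 0 < |x| < a (T−t)^{−β}, the map s ↦ S(s,x) is differentiable at t, the map y ↦ S(t,y)^m is twice continuously differentiable on a neighborhood of x, and ∂_t S(t,x) − Δ_x (S^m)(t,x) − |x|^σ S(t,x)^p ≤ 0, where Δ_x denotes the Laplacian in the space variable. -/

import Mathlib

open MeasureTheory

/-- The Laplacian of `f : ℝᴺ → ℝ` at `x`, as the sum of the second partial derivatives. -/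
noncomputable def laplacian {N : ℕ} (f : EuclideanSpace ℝ (Fin N) → ℝ)
    (x : EuclideanSpace ℝ (Fin N)) : ℝ :=
  ∑ i : Fin N,
    fderiv ℝ (fun y => fderiv ℝ f y (EuclideanSpace.single i 1)) x (EuclideanSpace.single i 1)

section Aux

open Filter in
private lemma lap_eval {N : ℕ} (c k q : ℝ) (x : EuclideanSpace ℝ (Fin N))
    (F : EuclideanSpace ℝ (Fin N) → ℝ)
    (hF : ∀ᶠ y in nhds x, F y = c * (1 - ‖y‖ ^ 2 * k) ^ q)
    (hpos : ∀ᶠ y in nhds x, (0:ℝ) < 1 - ‖y‖ ^ 2 * k) :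
    laplacian F x =
      N * (-(2 * c * q * k) * (1 - ‖x‖ ^ 2 * k) ^ (q - 1))
        + 4 * c * q * (q - 1) * k ^ 2 * (1 - ‖x‖ ^ 2 * k) ^ (q - 2) * ‖x‖ ^ 2 := by
  have hder : ∀ y : EuclideanSpace ℝ (Fin N),
      HasFDerivAt (fun z : EuclideanSpace ℝ (Fin N) => 1 - ‖z‖ ^ 2 * k)
        (-(k • ((2:ℝ) • innerSL ℝ y))) y := by
    intro y
    have := ((hasStrictFDerivAt_norm_sq y).hasFDerivAt.mul_const k).const_sub 1
    refine this.congr_fderiv ?_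
    module
  have hψder : ∀ y : EuclideanSpace ℝ (Fin N), (1 - ‖y‖ ^ 2 * k) ≠ 0 →
      ∀ i : Fin N, fderiv ℝ (fun z => c * (1 - ‖z‖ ^ 2 * k) ^ q) y (EuclideanSpace.single i 1)
        = (-(2 * c * q * k) * (1 - ‖y‖ ^ 2 * k) ^ (q - 1)) * y i := by
    intro y hy i
    have h1 := ((hder y).rpow_const (p := q) (Or.inl hy)).const_mul c
    rw [h1.fderiv]
    simp [EuclideanSpace.inner_single_right, real_inner_comm]
    ring
  have hx0 : (1 - ‖x‖ ^ 2 * k) ≠ 0 := (hpos.self_of_nhds).ne'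
  have hsecond : ∀ i : Fin N,
      fderiv ℝ (fun y => fderiv ℝ F y (EuclideanSpace.single i 1)) x (EuclideanSpace.single i 1)
        = (-(2 * c * q * k) * (1 - ‖x‖ ^ 2 * k) ^ (q - 1))
          + (4 * c * q * (q - 1) * k ^ 2 * (1 - ‖x‖ ^ 2 * k) ^ (q - 2)) * (x i) ^ 2 := by
    intro i
    have hEnt : (fun y => fderiv ℝ F y (EuclideanSpace.single i 1)) =ᶠ[nhds x]
        (fun y => (-(2 * c * q * k) * (1 - ‖y‖ ^ 2 * k) ^ (q - 1)) * y i) := by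
      filter_upwards [hF.eventually_nhds, hpos] with y hy hy2
      rw [show fderiv ℝ F y = fderiv ℝ (fun z => c * (1 - ‖z‖ ^ 2 * k) ^ q) y from
        Filter.EventuallyEq.fderiv_eq hy]
      exact hψder y hy2.ne' i
    rw [hEnt.fderiv_eq]
    have hg1 := (((hder x).rpow_const (p := q - 1) (Or.inl hx0)).const_mul (-(2 * c * q * k)))
    have hpr : HasFDerivAt (fun y : EuclideanSpace ℝ (Fin N) => y i)
        (EuclideanSpace.proj i : EuclideanSpace ℝ (Fin N) →L[ℝ] ℝ) x :=
      (EuclideanSpace.proj i : EuclideanSpace ℝ (Fin N) →L[ℝ] ℝ).hasFDerivAt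
    have h3 : HasFDerivAt (fun y : EuclideanSpace ℝ (Fin N) =>
        -(2 * c * q * k) * (1 - ‖y‖ ^ 2 * k) ^ (q - 1) * y i) _ x := hg1.mul hpr
    rw [h3.fderiv]
    simp [EuclideanSpace.inner_single_right, real_inner_comm, EuclideanSpace.single_apply]
    rw [show q - 1 - 1 = q - 2 by ring]
    ring
  unfold laplacian
  rw [Finset.sum_congr rfl (fun i _ => hsecond i), Finset.sum_add_distrib,
    Finset.sum_const, ← Finset.mul_sum]
  have hnorm : ∑ i : Fin N, (x i) ^ 2 = ‖x‖ ^ 2 := by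
    rw [EuclideanSpace.norm_eq, Real.sq_sqrt (by positivity)]
    simp [sq_abs]
  rw [hnorm]
  simp [Finset.card_univ]

open Filter in
private lemma time_deriv_aux (T t α' β' γ' A r a2 : ℝ) (hτ : 0 < T - t)
    (hf : (0:ℝ) < 1 - r ^ 2 * (T - t) ^ (2 * β') / a2) :
    HasDerivAt (fun s => (T - s) ^ (-α') * A * (max 0 (1 - r ^ 2 * (T - s) ^ (2 * β') / a2)) ^ γ')
      ((T - t) ^ (-α') * (T - t) ^ (-1 : ℝ) * A *
        (α' * (1 - r ^ 2 * (T - t) ^ (2 * β') / a2) ^ γ'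
          + 2 * β' * γ' * (r ^ 2 * (T - t) ^ (2 * β') / a2) *
            (1 - r ^ 2 * (T - t) ^ (2 * β') / a2) ^ (γ' - 1))) t := by
  have hu : HasDerivAt (fun s : ℝ => T - s) (-1) t := by
    simpa using (hasDerivAt_id t).const_sub T
  have hv := hu.rpow_const (p := -α') (Or.inl hτ.ne')
  have hw := hu.rpow_const (p := 2 * β') (Or.inl hτ.ne')
  have hq : HasDerivAt (fun s => 1 - r ^ 2 * (T - s) ^ (2 * β') / a2)
      (-(r ^ 2 * (-1 * (2 * β') * (T - t) ^ (2 * β' - 1)) / a2)) t :=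
    ((hw.const_mul (r ^ 2)).div_const a2).const_sub 1
  have hz := hq.rpow_const (p := γ') (Or.inl hf.ne')
  have hφ := (hv.mul_const A).mul hz
  have hφ2 : HasDerivAt
      (fun s => (T - s) ^ (-α') * A * (1 - r ^ 2 * (T - s) ^ (2 * β') / a2) ^ γ')
      ((T - t) ^ (-α') * (T - t) ^ (-1 : ℝ) * A *
        (α' * (1 - r ^ 2 * (T - t) ^ (2 * β') / a2) ^ γ'
          + 2 * β' * γ' * (r ^ 2 * (T - t) ^ (2 * β') / a2) *
            (1 - r ^ 2 * (T - t) ^ (2 * β') / a2) ^ (γ' - 1))) t := by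
    refine hφ.congr_deriv ?_
    rw [show (-α' - 1 : ℝ) = -α' + -1 by ring, show (2 * β' - 1 : ℝ) = 2 * β' + -1 by ring]
    simp only [Real.rpow_add hτ]
    ring
  have hev : ∀ᶠ s in nhds t, (0:ℝ) < 1 - r ^ 2 * (T - s) ^ (2 * β') / a2 :=
    hq.continuousAt.eventually (eventually_gt_nhds hf)
  have heq : (fun s => (T - s) ^ (-α') * A * (max 0 (1 - r ^ 2 * (T - s) ^ (2 * β') / a2)) ^ γ')
      =ᶠ[nhds t] (fun s => (T - s) ^ (-α') * A * (1 - r ^ 2 * (T - s) ^ (2 * β') / a2) ^ γ') := by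
    filter_upwards [hev] with s hs
    rw [max_eq_right hs.le]
  exact hφ2.congr_of_eventuallyEq heq

private lemma inner_ineq (α β γ N' W G f₁ pp : ℝ) (hα : 0 < α) (hβ : 0 < β) (hγ : 0 < γ)
    (hN : 0 ≤ N') (hG0 : 0 < G) (hG1 : G < 1) (hW : 0 < W) (hpp : 1 < pp)
    (hf₁ : f₁ = 2*β*γ/(α + 2*N'*β + 2*β*γ))
    (hWK : α + 2*N'*β ≤ W * f₁ ^ (γ*(pp-1))) :
    α*(1-G)^γ + 2*β*γ*G*(1-G)^(γ-1) - (4*β*γ*G*(1-G)^(γ-1) - 2*N'*β*(1-G)^γ)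
      - W*(1-G)^(γ*pp) ≤ 0 := by
  have hfG : (0:ℝ) < 1 - G := by linarith
  have hden : 0 < α + 2*N'*β + 2*β*γ := by positivity
  have h1 : (1-G)^γ = (1-G) * (1-G)^(γ-1) := by
    have h := Real.rpow_add hfG 1 (γ-1)
    rw [Real.rpow_one] at h
    rw [← h]; congr 1; ring
  have h2 : (1-G)^(γ*pp) = (1-G)^γ * (1-G)^(γ*(pp-1)) := by
    rw [← Real.rpow_add hfG]; congr 1; ring
  have hB2 : 0 < (1-G)^(γ-1) := Real.rpow_pos_of_pos hfG _
  have hB1 : 0 < (1-G)^γ := Real.rpow_pos_of_pos hfG _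
  have hB4 : 0 < (1-G)^(γ*(pp-1)) := Real.rpow_pos_of_pos hfG _
  rcases le_or_gt (1 - G) f₁ with hc | hc
  · have hlin : (α + 2*N'*β) * (1-G) ≤ 2*β*γ*G := by
      rw [hf₁, le_div_iff₀ hden] at hc
      nlinarith
    have hW4 : 0 < W * (1-G)^(γ*pp) := mul_pos hW (Real.rpow_pos_of_pos hfG _)
    have heq : α*(1-G)^γ + 2*β*γ*G*(1-G)^(γ-1) - (4*β*γ*G*(1-G)^(γ-1) - 2*N'*β*(1-G)^γ)
        - W*(1-G)^(γ*pp)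
        = ((α + 2*N'*β)*(1-G) - 2*β*γ*G) * (1-G)^(γ-1) - W*(1-G)^(γ*pp) := by
      rw [h1]; ring
    rw [heq]
    nlinarith
  · have hf₁pos : 0 < f₁ := by rw [hf₁]; positivity
    have hmono : f₁^(γ*(pp-1)) ≤ (1-G)^(γ*(pp-1)) :=
      Real.rpow_le_rpow hf₁pos.le hc.le (by nlinarith)
    have hWf : α + 2*N'*β ≤ W * (1-G)^(γ*(pp-1)) :=
      le_trans hWK (by nlinarith)
    have h3 : 0 ≤ 2*β*γ*G*(1-G)^(γ-1) := by positivity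
    have heq : α*(1-G)^γ + 2*β*γ*G*(1-G)^(γ-1) - (4*β*γ*G*(1-G)^(γ-1) - 2*N'*β*(1-G)^γ)
        - W*(1-G)^(γ*pp)
        = (α+2*N'*β)*(1-G)^γ - 2*β*γ*G*(1-G)^(γ-1) - W*((1-G)^γ * (1-G)^(γ*(pp-1))) := by
      rw [h2]; ring
    rw [heq]
    nlinarith [mul_le_mul_of_nonneg_right hWf hB1.le]

end Aux

/-- Lemma 6.2: the explicit self-similar profile `S` is a classical subsolution of
`∂ₜ u = Δ uᵐ + |x|^σ u^p` on the open region where it is positive and `x ≠ 0`. -/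
theorem self_similar_subsolution
    (N : ℕ) (hN : 1 ≤ N) (m p σ : ℝ) (hm : 1 < m) (hp : 1 < p)
    (hσl : max (-2) (-(N : ℝ)) < σ) (hσu : σ < 0)
    (hpG : 1 - σ * (m - 1) / 2 < p) (hpm : p < m) :
    ∃ A₀ : ℝ, 0 < A₀ ∧
      ∀ A : ℝ, A₀ ≤ A → ∀ T : ℝ, 0 < T →
        let α := (σ + 2) / (2 * (p - (1 - σ * (m - 1) / 2)))
        let β := (m - p) / (2 * (p - (1 - σ * (m - 1) / 2)))
        let a := Real.sqrt (m * A ^ (m - 1) / (β * (m - 1)))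
        let S : ℝ → EuclideanSpace ℝ (Fin N) → ℝ := fun t x =>
          (T - t) ^ (-α) * A * (max 0 (1 - ‖x‖ ^ 2 * (T - t) ^ (2 * β) / a ^ 2)) ^ (1 / (m - 1))
        ∀ t : ℝ, 0 ≤ t → t < T →
          ∀ x : EuclideanSpace ℝ (Fin N), 0 < ‖x‖ → ‖x‖ < a * (T - t) ^ (-β) →
            DifferentiableAt ℝ (fun s => S s x) t ∧
            (∃ U ∈ nhds x, ContDiffOn ℝ 2 (fun y => S t y ^ m) U) ∧
            deriv (fun s => S s x) t - laplacian (fun y => S t y ^ m) x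
                - ‖x‖ ^ σ * S t x ^ p ≤ 0 := by
  have hm1 : (0:ℝ) < m - 1 := by linarith
  have hσ2 : (0:ℝ) < σ + 2 := by
    have := (le_max_left (-2) (-(N:ℝ))).trans_lt hσl; linarith
  set α : ℝ := (σ + 2) / (2 * (p - (1 - σ * (m - 1) / 2))) with hαdef
  set β : ℝ := (m - p) / (2 * (p - (1 - σ * (m - 1) / 2))) with hβdef
  set γ : ℝ := 1 / (m - 1) with hγdef
  set e : ℝ := p - (1 - σ * (m - 1) / 2) with hedef
  have he : 0 < e := by rw [hedef]; linarith
  have hdne : (2 * (p - (1 - σ * (m - 1) / 2))) ≠ 0 := by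
    rw [← hedef] at *; positivity
  have hα : 0 < α := by rw [hαdef]; exact div_pos hσ2 (by linarith)
  have hβ : 0 < β := by rw [hβdef]; exact div_pos (by linarith) (by linarith)
  have hγ : 0 < γ := by rw [hγdef]; positivity
  have hinv : (2 * (p - (1 - σ * (m - 1) / 2))) * (2 * (p - (1 - σ * (m - 1) / 2)))⁻¹ = 1 :=
    mul_inv_cancel₀ hdne
  have hkey1 : α * (m - 1) = 2 * β + 1 := by
    rw [hαdef, hβdef, hedef, div_eq_mul_inv, div_eq_mul_inv]; linear_combination hinv
  have hkey2 : α * (p - 1) + β * σ = 1 := by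
    rw [hαdef, hβdef, hedef, div_eq_mul_inv, div_eq_mul_inv]; linear_combination hinv
  set f₁ : ℝ := 2*β*γ/(α + 2*(N:ℝ)*β + 2*β*γ) with hf₁def
  have hNβ : 0 < α + 2*(N:ℝ)*β := by positivity
  have hf₁pos : 0 < f₁ := by rw [hf₁def]; positivity
  set C₁ : ℝ := m / (β * (m - 1)) with hC₁def
  have hC₁ : 0 < C₁ := by rw [hC₁def]; apply div_pos (by linarith); positivity
  set K : ℝ := C₁ ^ (σ / 2) * f₁ ^ (γ * (p - 1)) with hKdef
  have hK : 0 < K := by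
    rw [hKdef]; exact mul_pos (Real.rpow_pos_of_pos hC₁ _) (Real.rpow_pos_of_pos hf₁pos _)
  refine ⟨max 1 (((α + 2*(N:ℝ)*β) / K) ^ (1/e)), lt_of_lt_of_le one_pos (le_max_left _ _), ?_⟩
  intro A hA T hT
  have hA1 : (1:ℝ) ≤ A := le_trans (le_max_left _ _) hA
  have hA0 : (0:ℝ) < A := lt_of_lt_of_le one_pos hA1
  have hAm : 0 < A ^ (m - 1) := Real.rpow_pos_of_pos hA0 _
  intro αv βv av Sv
  intro t ht htT x hrpos hrlt
  have hτ : 0 < T - t := sub_pos.mpr htT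
  have hav : av = Real.sqrt (m * A ^ (m - 1) / (β * (m - 1))) := rfl
  have harg : 0 < m * A ^ (m - 1) / (β * (m - 1)) := by
    apply div_pos (mul_pos (by linarith) hAm) (mul_pos hβ hm1)
  have ha0 : 0 < av := by rw [hav]; exact Real.sqrt_pos.mpr harg
  have ha2 : av ^ 2 = m * A ^ (m - 1) / (β * (m - 1)) := by
    rw [hav]; exact Real.sq_sqrt harg.le
  have hrlt' : ‖x‖ < av * (T - t) ^ (-β) := hrlt
  have hS : ∀ s (y : EuclideanSpace ℝ (Fin N)), Sv s y
      = (T - s) ^ (-α) * A * (max 0 (1 - ‖y‖ ^ 2 * (T - s) ^ (2 * β) / av ^ 2)) ^ γ :=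
    fun s y => rfl
  set k : ℝ := (T - t) ^ (2 * β) / av ^ 2 with hk
  have hk0 : 0 < k := by rw [hk]; exact div_pos (Real.rpow_pos_of_pos hτ _) (pow_pos ha0 2)
  -- f₀ := 1 - ‖x‖^2 * k is in (0,1)
  have hGlt : ‖x‖ ^ 2 * k < 1 := by
    have h3 : ((T - t) ^ (-β)) ^ 2 = (T - t) ^ (-(2*β)) := by
      rw [← Real.rpow_natCast ((T - t) ^ (-β)) 2, ← Real.rpow_mul hτ.le]
      congr 1; push_cast; ring
    have h4 : (T - t) ^ (-(2*β)) * (T - t) ^ (2*β) = 1 := by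
      rw [← Real.rpow_add hτ]; simp
    have h2 : (av * (T - t) ^ (-β)) ^ 2 * k = 1 := by
      rw [mul_pow, h3, hk]
      have h5 : av ^ 2 * (T - t) ^ (-(2*β)) * ((T - t) ^ (2*β) / av ^ 2)
          = ((T - t) ^ (-(2*β)) * (T - t) ^ (2*β)) * (av ^ 2 / av ^ 2) := by ring
      rw [h5, h4, div_self (pow_pos ha0 2).ne']
      norm_num
    have h1 : ‖x‖ ^ 2 < (av * (T - t) ^ (-β)) ^ 2 := by
      have := pow_lt_pow_left₀ hrlt' (norm_nonneg x) (n := 2) (by norm_num)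
      exact this
    calc ‖x‖ ^ 2 * k < (av * (T - t) ^ (-β)) ^ 2 * k := by
          exact mul_lt_mul_of_pos_right h1 hk0
      _ = 1 := h2
  have hGpos : 0 < ‖x‖ ^ 2 * k := mul_pos (pow_pos hrpos 2) hk0
  have hf₀ : (0:ℝ) < 1 - ‖x‖ ^ 2 * k := by linarith
  -- eventually positivity in space
  have hUnhds : ∀ᶠ y in nhds x, (0:ℝ) < 1 - ‖y‖ ^ 2 * k := by
    have hcont : Continuous fun y : EuclideanSpace ℝ (Fin N) => 1 - ‖y‖ ^ 2 * k :=
      continuous_const.sub ((continuous_norm.pow 2).mul continuous_const)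
    exact hcont.continuousAt.eventually (eventually_gt_nhds hf₀)
  set c : ℝ := ((T - t) ^ (-α) * A) ^ m with hcdef
  have hFpt : ∀ y : EuclideanSpace ℝ (Fin N), 0 < 1 - ‖y‖ ^ 2 * k →
      Sv t y ^ m = c * (1 - ‖y‖ ^ 2 * k) ^ (γ * m) := by
    intro y hy
    have hy' : (0:ℝ) < 1 - ‖y‖ ^ 2 * (T - t) ^ (2 * β) / av ^ 2 := by
      rw [mul_div_assoc, ← hk]; exact hy
    rw [hS t y, max_eq_right hy'.le, mul_div_assoc, ← hk,
      Real.mul_rpow (mul_nonneg (Real.rpow_nonneg hτ.le _) hA0.le)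
        (Real.rpow_nonneg hy.le _),
      ← Real.rpow_mul hy.le, hcdef]
  have hF : ∀ᶠ y in nhds x, Sv t y ^ m = c * (1 - ‖y‖ ^ 2 * k) ^ (γ * m) := by
    filter_upwards [hUnhds] with y hy
    exact hFpt y hy
  -- time derivative
  have hf₀' : (0:ℝ) < 1 - ‖x‖ ^ 2 * (T - t) ^ (2 * β) / av ^ 2 := by
    rw [mul_div_assoc, ← hk]; exact hf₀
  have hder0 : HasDerivAt (fun s => Sv s x)
      ((T - t) ^ (-α) * (T - t) ^ (-1 : ℝ) * A *
        (α * (1 - ‖x‖ ^ 2 * (T - t) ^ (2 * β) / av ^ 2) ^ γ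
          + 2 * β * γ * (‖x‖ ^ 2 * (T - t) ^ (2 * β) / av ^ 2) *
            (1 - ‖x‖ ^ 2 * (T - t) ^ (2 * β) / av ^ 2) ^ (γ - 1))) t :=
    time_deriv_aux T t α β γ A ‖x‖ (av ^ 2) hτ hf₀'
  simp only [mul_div_assoc] at hder0
  rw [← hk] at hder0
  -- laplacian
  have hlap := lap_eval c k (γ * m) x (fun y => Sv t y ^ m) hF hUnhds
  have hq1 : γ * m - 1 = γ := by rw [hγdef]; field_simp; ring
  have hq2 : γ * m - 2 = γ - 1 := by rw [hγdef]; field_simp; ring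
  rw [hq1, hq2] at hlap
  -- c * (γ*m) * k = A * β * X12
  have hAm' : A ^ m = A ^ (m - 1) * A := by
    have h := Real.rpow_add hA0 (m - 1) 1
    rw [Real.rpow_one] at h
    rw [← h]; congr 1; ring
  have hc1 : c = (T - t) ^ ((-α) * m) * A ^ m := by
    rw [hcdef, Real.mul_rpow (Real.rpow_nonneg hτ.le _) hA0.le, ← Real.rpow_mul hτ.le]
  have hτm : (T - t) ^ ((-α) * m) * (T - t) ^ (2 * β) = (T - t) ^ (-α) * (T - t) ^ (-1:ℝ) := by
    rw [← Real.rpow_add hτ, ← Real.rpow_add hτ]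
    congr 1; linear_combination -hkey1
  have hck : c * (γ * m) * k = A * β * ((T - t) ^ (-α) * (T - t) ^ (-1:ℝ)) := by
    have expand : c * (γ * m) * k = ((T - t) ^ ((-α) * m) * (T - t) ^ (2 * β)) *
        (A ^ (m - 1) * A * ((1/(m-1)) * m) / (m * A ^ (m - 1) / (β * (m - 1)))) := by
      rw [hc1, hAm', hk, ha2, hγdef]; ring
    rw [expand, hτm]
    have hfactor : A ^ (m - 1) * A * ((1/(m-1)) * m) / (m * A ^ (m - 1) / (β * (m - 1)))
        = A * β := by
      field_simp
    rw [hfactor]; ring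
  have hlap2 : laplacian (fun y => Sv t y ^ m) x
      = (T - t) ^ (-α) * (T - t) ^ (-1:ℝ) * A *
        (4*β*γ*(‖x‖ ^ 2 * k)*(1 - ‖x‖ ^ 2 * k)^(γ-1) - 2*(N:ℝ)*β*(1 - ‖x‖ ^ 2 * k)^γ) := by
    rw [hlap]
    linear_combination (4*γ*k*‖x‖ ^ 2*(1 - ‖x‖ ^ 2 * k)^(γ-1) - 2*(N:ℝ)*(1 - ‖x‖ ^ 2 * k)^γ) * hck
  -- value of S
  have hSx : Sv t x = (T - t) ^ (-α) * A * (1 - ‖x‖ ^ 2 * k) ^ γ := by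
    rw [hS t x, max_eq_right hf₀'.le, mul_div_assoc, ← hk]
  -- reaction term bound
  have hSxp : Sv t x ^ p = (T - t) ^ ((-α) * p) * (A ^ p * (1 - ‖x‖ ^ 2 * k) ^ (γ * p)) := by
    rw [hSx, Real.mul_rpow (mul_nonneg (Real.rpow_nonneg hτ.le _) hA0.le)
        (Real.rpow_nonneg hf₀.le _),
      Real.mul_rpow (Real.rpow_nonneg hτ.le _) hA0.le,
      ← Real.rpow_mul hτ.le, ← Real.rpow_mul hf₀.le]
    ring
  have hargeq : m * A ^ (m - 1) / (β * (m - 1)) = A ^ (m - 1) * C₁ := by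
    rw [hC₁def]; ring
  have h0 : av ^ σ = (A ^ (m - 1) * C₁) ^ (σ/2) := by
    rw [hav, hargeq, Real.sqrt_eq_rpow, ← Real.rpow_mul (by positivity)]
    rw [show (1:ℝ)/2*σ = σ/2 by ring]
  have hsa : av ^ σ = A ^ ((m-1)*(σ/2)) * C₁ ^ (σ/2) := by
    rw [h0, Real.mul_rpow hAm.le hC₁.le, ← Real.rpow_mul hA0.le]
  have havσ2 : av ^ σ * A ^ p = A * A ^ e * C₁ ^ (σ/2) := by
    have hA3 : A ^ ((m-1)*(σ/2)) * A ^ p = A * A ^ e := by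
      rw [← Real.rpow_add hA0, show (m-1)*(σ/2) + p = 1 + e by rw [hedef]; ring,
        Real.rpow_add hA0, Real.rpow_one]
    rw [hsa]
    linear_combination C₁ ^ (σ/2) * hA3
  have hexp2 : (T - t) ^ ((-β)*σ) * (T - t) ^ ((-α)*p)
      = (T - t) ^ (-α) * (T - t) ^ (-1:ℝ) := by
    rw [← Real.rpow_add hτ, ← Real.rpow_add hτ]
    congr 1; linear_combination -hkey2
  have hreact : (T - t) ^ (-α) * (T - t) ^ (-1:ℝ) * A *
      (A ^ e * C₁ ^ (σ/2) * (1 - ‖x‖ ^ 2 * k) ^ (γ * p)) ≤ ‖x‖ ^ σ * Sv t x ^ p := by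
    have h3 := Real.rpow_le_rpow_of_nonpos hrpos hrlt'.le hσu.le
    rw [Real.mul_rpow ha0.le (Real.rpow_nonneg hτ.le _), ← Real.rpow_mul hτ.le] at h3
    have hSp_pos : (0:ℝ) ≤ Sv t x ^ p := Real.rpow_nonneg (by rw [hSx]; positivity) p
    have h4 : av ^ σ * (T - t) ^ ((-β)*σ) * Sv t x ^ p ≤ ‖x‖ ^ σ * Sv t x ^ p :=
      mul_le_mul_of_nonneg_right h3 hSp_pos
    refine le_trans (le_of_eq ?_) h4
    rw [hSxp]
    linear_combination (-(A ^ p * (1 - ‖x‖ ^ 2 * k) ^ (γ * p)) * av ^ σ) * hexp2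
      + (-((1 - ‖x‖ ^ 2 * k) ^ (γ * p)) * ((T - t) ^ (-α) * (T - t) ^ (-1:ℝ))) * havσ2
  -- the key largeness of A
  have hWK : α + 2*(N:ℝ)*β ≤ (A ^ e * C₁ ^ (σ/2)) * f₁ ^ (γ*(p-1)) := by
    have h1 : ((α + 2*(N:ℝ)*β)/K) ^ ((1/e)*e) ≤ A ^ e := by
      rw [Real.rpow_mul (by positivity)]
      exact Real.rpow_le_rpow (Real.rpow_nonneg (by positivity) _)
        (le_trans (le_max_right _ _) hA) he.le
    rw [show (1/e)*e = 1 by field_simp, Real.rpow_one] at h1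
    have h2 : (α + 2*(N:ℝ)*β)/K * K ≤ A ^ e * K := mul_le_mul_of_nonneg_right h1 hK.le
    rw [div_mul_cancel₀ _ hK.ne'] at h2
    calc α + 2*(N:ℝ)*β ≤ A ^ e * K := h2
      _ = (A ^ e * C₁ ^ (σ/2)) * f₁ ^ (γ*(p-1)) := by rw [hKdef]; ring
  have hinner := inner_ineq α β γ (N:ℝ) (A ^ e * C₁ ^ (σ/2)) (‖x‖ ^ 2 * k) f₁ p
    hα hβ hγ (Nat.cast_nonneg N) hGpos hGlt
    (mul_pos (Real.rpow_pos_of_pos hA0 _) (Real.rpow_pos_of_pos hC₁ _)) hp hf₁def hWK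
  refine ⟨hder0.differentiableAt, ⟨_, hUnhds, ?_⟩, ?_⟩
  · -- ContDiffOn
    refine ContDiffOn.congr ?_ (fun y hy => hFpt y hy)
    intro y hy
    have h1 : ContDiffAt ℝ 2 (fun z : EuclideanSpace ℝ (Fin N) => 1 - ‖z‖ ^ 2 * k) y :=
      contDiffAt_const.sub (((contDiff_norm_sq ℝ).contDiffAt).mul contDiffAt_const)
    exact (contDiffAt_const.mul (h1.rpow_const_of_ne (ne_of_gt hy))).contDiffWithinAt
  · -- the inequality
    rw [hder0.deriv, hlap2]
    have hX12A : 0 < (T - t) ^ (-α) * (T - t) ^ (-1:ℝ) * A :=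
      mul_pos (mul_pos (Real.rpow_pos_of_pos hτ _) (Real.rpow_pos_of_pos hτ _)) hA0
    have hprod := mul_nonpos_of_nonneg_of_nonpos hX12A.le hinner
    refine le_trans (sub_le_sub_left hreact _) (le_trans (le_of_eq ?_) hprod)
    ring
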